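/- Let B₁ and B₂ be two operators on bounded functions given by B_i[V](x) = max{h_i(x), min{g_i(x), γ ∫ V dκ(x,·)}} with the same kernel κ and discount γ ∈ (0,1), and let V₁*, V₂* be their respective fixed points. Then ‖V₁* - V₂*‖_∞ ≤ (1/(1-γ)) · max{‖h₁ - h₂‖_∞, ‖g₁ - g₂‖_∞}. -/
import Mathlib


open MeasureTheory ProbabilityTheory

/-- If `V₁*`, `V₂*` are the fixed points of two clamped Bellman operators with the
same Markov kernel `κ` and discount `γ ∈ (0,1)`, but data `(g₁,h₁)` and `(g₂,h₂)`,
then `‖V₁* - V₂*‖_∞ ≤ (1/(1-γ)) · max{‖h₁-h₂‖_∞, ‖g₁-g₂‖_∞}` (stated via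
pointwise bounds). -/
theorem bellman_fixed_point_perturbation
    {X : Type*} [MeasurableSpace X] (κ : Kernel X X) [IsMarkovKernel κ]
    (γ : ℝ) (hγ0 : 0 < γ) (hγ1 : γ < 1)
    (g₁ h₁ g₂ h₂ : X → ℝ)
    (Dh Dg : ℝ)
    (hDh : ∀ x, |h₁ x - h₂ x| ≤ Dh) (hDg : ∀ x, |g₁ x - g₂ x| ≤ Dg)
    (V₁ V₂ : X → ℝ) (hm₁ : Measurable V₁) (hm₂ : Measurable V₂)
    (hb₁ : ∃ C, ∀ x, |V₁ x| ≤ C) (hb₂ : ∃ C, ∀ x, |V₂ x| ≤ C)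
    (hfix₁ : ∀ x, V₁ x = max (h₁ x) (min (g₁ x) (γ * ∫ x', V₁ x' ∂(κ x))))
    (hfix₂ : ∀ x, V₂ x = max (h₂ x) (min (g₂ x) (γ * ∫ x', V₂ x' ∂(κ x)))) :
    ∀ x, |V₁ x - V₂ x| ≤ (1 / (1 - γ)) * max Dh Dg := by
  intro x₀
  obtain ⟨C₁, hC₁⟩ := hb₁
  obtain ⟨C₂, hC₂⟩ := hb₂
  set S : Set ℝ := Set.range (fun x => |V₁ x - V₂ x|) with hS
  have hSne : S.Nonempty := ⟨_, ⟨x₀, rfl⟩⟩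
  have hSbdd : BddAbove S := by
    refine ⟨C₁ + C₂, ?_⟩
    rintro _ ⟨x, rfl⟩
    calc |V₁ x - V₂ x| ≤ |V₁ x| + |V₂ x| := abs_sub _ _
      _ ≤ C₁ + C₂ := add_le_add (hC₁ x) (hC₂ x)
  set D := sSup S with hD
  have hmem : ∀ x, |V₁ x - V₂ x| ≤ D := fun x => le_csSup hSbdd ⟨x, rfl⟩
  have hD0 : 0 ≤ D := le_trans (abs_nonneg _) (hmem x₀)
  have hDh0 : 0 ≤ Dh := le_trans (abs_nonneg _) (hDh x₀)
  have hint : ∀ x, |(∫ x', V₁ x' ∂(κ x)) - ∫ x', V₂ x' ∂(κ x)| ≤ D := by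
    intro x
    have hi₁ : Integrable V₁ (κ x) :=
      (integrable_const C₁).mono' hm₁.aestronglyMeasurable
        (ae_of_all _ fun y => by simpa using hC₁ y)
    have hi₂ : Integrable V₂ (κ x) :=
      (integrable_const C₂).mono' hm₂.aestronglyMeasurable
        (ae_of_all _ fun y => by simpa using hC₂ y)
    rw [← integral_sub hi₁ hi₂]
    have := norm_integral_le_of_norm_le_const (μ := κ x)
      (f := fun y => V₁ y - V₂ y) (C := D)
      (ae_of_all _ fun y => by simpa using hmem y)
    simpa using this
  have key : ∀ x, |V₁ x - V₂ x| ≤ max Dh Dg + γ * D := by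
    intro x
    rw [hfix₁ x, hfix₂ x]
    have h1 : |max (h₁ x) (min (g₁ x) (γ * ∫ x', V₁ x' ∂(κ x))) -
        max (h₂ x) (min (g₂ x) (γ * ∫ x', V₂ x' ∂(κ x)))| ≤
        max |h₁ x - h₂ x| |min (g₁ x) (γ * ∫ x', V₁ x' ∂(κ x)) -
          min (g₂ x) (γ * ∫ x', V₂ x' ∂(κ x))| := abs_max_sub_max_le_max _ _ _ _
    have h2 : |min (g₁ x) (γ * ∫ x', V₁ x' ∂(κ x)) -
        min (g₂ x) (γ * ∫ x', V₂ x' ∂(κ x))| ≤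
        max |g₁ x - g₂ x| |γ * (∫ x', V₁ x' ∂(κ x)) - γ * ∫ x', V₂ x' ∂(κ x)| :=
      abs_min_sub_min_le_max _ _ _ _
    have h3 : |γ * (∫ x', V₁ x' ∂(κ x)) - γ * ∫ x', V₂ x' ∂(κ x)| ≤ γ * D := by
      rw [← mul_sub, abs_mul, abs_of_pos hγ0]
      exact mul_le_mul_of_nonneg_left (hint x) hγ0.le
    have := le_trans h1 (max_le_max le_rfl (le_trans h2
      (max_le_max le_rfl h3)))
    have hγD : 0 ≤ γ * D := mul_nonneg hγ0.le hD0
    refine le_trans this ?_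
    refine max_le ?_ (max_le ?_ ?_)
    · exact le_trans (hDh x) (by nlinarith [le_max_left Dh Dg])
    · exact le_trans (hDg x) (by nlinarith [le_max_right Dh Dg])
    · nlinarith [le_max_left Dh Dg]
  have hDle : D ≤ max Dh Dg + γ * D := csSup_le hSne (by rintro _ ⟨x, rfl⟩; exact key x)
  have hfinal : D ≤ (1 / (1 - γ)) * max Dh Dg := by
    rw [div_mul_eq_mul_div, le_div_iff₀ (by linarith)]
    nlinarith
  exact le_trans (hmem x₀) hfinal
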